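/- arXiv:1902.03863 — 2 statements merged into one kernel-verified Lean document; each statement's English description precedes it below -/
import Mathlib

section
/- Let n ≥ 2 and 0 ≤ k < n be integers, q* = 2n²/((n−k)(2n−1)), and q* < q < ∞. Let δ ∈ (0,1) with 1/δ ∈ ℕ, and let M̃^k_{ρ,δ} be a linearized k-skeleton maximal operator built from some ρ : {x_1,…,x_u} → [1,2] ∩ δℤ and a face selection (ℓ^i)_{i=1}^u with the following overlap property for some constant C_0 = C_0(n,k): for every coordinate k-plane π, every subset J ⊆ {1,…,u} such that ℓ^i is parallel to π for all i ∈ J, and every affine translate V of π, #{ i ∈ J : ℓ^i ⊆ V } ≤ C_0 |J|^{1 − (n−k)(2n−1)/(2n²)}. Then there exists C = C(k,n,q) > 0 such that for every f ∈ L¹(ℝ^n) supported in 7Q_0 and every λ > 0: λ · |{x ∈ Q_0 : M̃^k_{ρ,δ} f(x) > λ}|^{1/q} ≤ C · δ^{n/q + k − n} · ‖f‖_{L¹}. -/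
open MeasureTheory Metric Set

noncomputable section

/-- A `k`-face of the axis-parallel cube in `ℝⁿ` with center `x` and side length `2r`:
the coordinates `j ∈ S` (with `#S = n - k`) are fixed at `x j ± r` (sign given by `ε j`),
the remaining coordinates range over `[x j - r, x j + r]`. -/
def kFace {n : ℕ} (x : Fin n → ℝ) (r : ℝ) (S : Finset (Fin n)) (ε : Fin n → Bool) :
    Set (Fin n → ℝ) :=
  {y | (∀ j ∈ S, y j = x j + (if ε j then r else -r)) ∧ ∀ j ∉ S, |y j - x j| ≤ r}

/-- The `k`-skeleton `S_k(x,r)` of the axis-parallel cube with center `x` and side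
length `2r`: the union of all its `k`-faces. -/
def skeleton (n k : ℕ) (x : Fin n → ℝ) (r : ℝ) : Set (Fin n → ℝ) :=
  ⋃ (S : Finset (Fin n)) (_ : S.card = n - k) (ε : Fin n → Bool), kFace x r S ε

/-- The `k`-skeleton maximal operator with width `δ`:
`M^k_δ f (x) = sup_{1 ≤ r ≤ 2} min_j ⨍_{S^j_{k,δ}(x,r)} |f|`, the minimum being taken
over all `k`-faces of the cube with center `x` and side length `2r`, each face thickened
by `δ` in the `ℓ∞` metric (which is the sup metric on `Fin n → ℝ`). -/
def skelMax (n k : ℕ) (δ : ℝ) (f : (Fin n → ℝ) → ℝ) (x : Fin n → ℝ) : ℝ :=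
  ⨆ r ∈ Set.Icc (1 : ℝ) 2,
    ⨅ (S : {S : Finset (Fin n) // S.card = n - k}) (ε : Fin n → Bool),
      ⨍ y in cthickening δ (kFace x r S.1 ε), |f y|

/-- The unit cube `Q₀ = [0,1)ⁿ`. -/
def Q0 (n : ℕ) : Set (Fin n → ℝ) := Set.univ.pi fun _ => Set.Ico (0 : ℝ) 1

/-- The cube `7Q₀`, concentric with `Q₀` and of side length `7`. -/
def sevenQ0 (n : ℕ) : Set (Fin n → ℝ) := Set.univ.pi fun _ => Set.Icc (-3 : ℝ) 4

/-- The translate by `v` of the coordinate `k`-plane spanned by the basis vectors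
`e_j`, `j ∈ π`. -/
def planeTranslate {n : ℕ} (π : Finset (Fin n)) (v : Fin n → ℝ) : Set (Fin n → ℝ) :=
  {y | ∀ j ∉ π, y j = v j}

/-- Center of the grid cube indexed by `z` in the grid of width `η` on `Q₀`. -/
def gridCenter {n : ℕ} (η : ℝ) {m : ℕ} (z : Fin n → Fin m) : Fin n → ℝ :=
  fun j => η * ((z j : ℝ) + 1 / 2)

/-- Index of the grid cube of width `η` containing `x` (for `x ∈ Q₀`). -/
def zOf {n : ℕ} (η : ℝ) {m : ℕ} (hm : 0 < m) (x : Fin n → ℝ) : Fin n → Fin m :=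
  fun j => ⟨(⌊x j / η⌋).toNat % m, Nat.mod_lt _ hm⟩

/-- The selected `k`-face `ℓᶻ` of the skeleton `S_k(x_z, ρ z)`, where `x_z` is the center
of the grid cube indexed by `z`. -/
def linFace {n : ℕ} (η : ℝ) {m : ℕ} (ρ : (Fin n → Fin m) → ℝ)
    (S : (Fin n → Fin m) → Finset (Fin n)) (ε : (Fin n → Fin m) → Fin n → Bool)
    (z : Fin n → Fin m) : Set (Fin n → ℝ) :=
  kFace (gridCenter η z) (ρ z) (S z) (ε z)

/-- The linearized `k`-skeleton maximal operator `M̃^k_{ρ,η}` of width `η`: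
for `x` in the grid cube indexed by `z`, it averages `|f|` over the closed
`η`-neighborhood (in the `ℓ∞` metric) of the selected face `ℓᶻ`. -/
def linMax {n : ℕ} (η : ℝ) {m : ℕ} (hm : 0 < m) (ρ : (Fin n → Fin m) → ℝ)
    (S : (Fin n → Fin m) → Finset (Fin n)) (ε : (Fin n → Fin m) → Fin n → Bool)
    (f : (Fin n → ℝ) → ℝ) (x : Fin n → ℝ) : ℝ :=
  ⨍ y in cthickening η (linFace η ρ S ε (zOf η hm x)), |f y|

/-- The overlap property for the selected faces: every affine translate `V` of a coordinate
`k`-plane `π` contains at most `C₀ · (#J)^{1 - (n-k)(2n-1)/(2n²)}` of the faces `ℓᶻ`, `z ∈ J`,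
whenever all the faces indexed by `J` are parallel to `π`. -/
def OverlapProp {n : ℕ} (k : ℕ) (η : ℝ) {m : ℕ} (ρ : (Fin n → Fin m) → ℝ)
    (S : (Fin n → Fin m) → Finset (Fin n)) (ε : (Fin n → Fin m) → Fin n → Bool)
    (C0 : ℝ) : Prop :=
  ∀ π : Finset (Fin n), π.card = k →
    ∀ J : Set (Fin n → Fin m),
      (∀ z ∈ J, ∃ v : Fin n → ℝ, linFace η ρ S ε z ⊆ planeTranslate π v) →
      ∀ v : Fin n → ℝ,
        ({z ∈ J | linFace η ρ S ε z ⊆ planeTranslate π v}).ncard ≤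
          C0 * (J.ncard : ℝ) ^ (1 - ((n : ℝ) - k) * (2 * (n : ℝ) - 1) / (2 * (n : ℝ) ^ 2))

/-- Abstract maximal averaging operator `T f (x) = sup_{r ∈ I} ⨍_{A_{x,r}} |f|`. -/
def absMax {n : ℕ} {I : Type*} (A : (Fin n → ℝ) → I → Set (Fin n → ℝ))
    (f : (Fin n → ℝ) → ℝ) (x : Fin n → ℝ) : ℝ :=
  ⨆ r : I, ⨍ y in A x r, |f y|

/-- `goodCount A E lam μ` says: for at least `m/2` of the indices `j`, the subset of
`A j ∩ E` where the multiplicity function `Υ = Σᵢ 1_{Aᵢ ∩ E}` is at most `μ` has measure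
at least `(lam/2)·|A j|`. -/
def goodCount {n m : ℕ} (A : Fin m → Set (Fin n → ℝ)) (E : Set (Fin n → ℝ))
    (lam : ℝ) (μ : ℕ) : Prop :=
  (m : ℝ) / 2 ≤
    ({j : Fin m | ENNReal.ofReal (lam / 2) * volume (A j) ≤
        volume {y ∈ A j ∩ E | ({i : Fin m | y ∈ A i ∩ E}).ncard ≤ μ}}).ncard

/-! ### Auxiliary lemmas -/

/-- The fixed-coordinate values of a face. -/
def faceVal {n : ℕ} (x : Fin n → ℝ) (r : ℝ) (ε : Fin n → Bool) : Fin n → ℝ :=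
  fun j => x j + (if ε j then r else -r)

lemma kFace_nonempty {n : ℕ} (x : Fin n → ℝ) {r : ℝ} (hr : 0 ≤ r) (S : Finset (Fin n))
    (ε : Fin n → Bool) : (kFace x r S ε).Nonempty := by
  classical
  refine ⟨fun j => if j ∈ S then faceVal x r ε j else x j, ?_, ?_⟩
  · intro j hj; simp [hj, faceVal]
  · intro j hj; simp [hj, hr]

lemma cthickening_kFace_subset {n : ℕ} (x : Fin n → ℝ) (r δ : ℝ) (hδ : 0 ≤ δ)
    (S : Finset (Fin n)) (ε : Fin n → Bool) :
    cthickening δ (kFace x r S ε) ⊆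
      Set.univ.pi (fun j => if j ∈ S then Icc (faceVal x r ε j - δ) (faceVal x r ε j + δ)
        else Icc (x j - r - δ) (x j + r + δ)) := by
  classical
  intro y hy
  rw [mem_cthickening_iff] at hy
  have key : ∀ b : ℝ, (∀ a ∈ kFace x r S ε, b ≤ dist y a) → b ≤ δ := by
    intro b hb
    have h1 : ENNReal.ofReal b ≤ Metric.infEDist y (kFace x r S ε) := by
      rw [Metric.le_infEDist]
      intro a ha
      rw [edist_dist]
      exact ENNReal.ofReal_le_ofReal (hb a ha)
    exact (ENNReal.ofReal_le_ofReal_iff hδ).mp (h1.trans hy)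
  intro j _
  by_cases hj : j ∈ S
  · simp only [hj, if_true, mem_Icc]
    have : |y j - faceVal x r ε j| ≤ δ := by
      refine key _ (fun a ha => ?_)
      have h2 : a j = faceVal x r ε j := ha.1 j hj
      calc |y j - faceVal x r ε j| = dist (y j) (a j) := by rw [h2, Real.dist_eq]
        _ ≤ dist y a := dist_le_pi_dist y a j
    rw [abs_sub_le_iff] at this
    constructor <;> linarith [this.1, this.2]
  · simp only [hj, if_false, mem_Icc]
    have : |y j - x j| - r ≤ δ := by
      refine key _ (fun a ha => ?_)
      have h2 : |a j - x j| ≤ r := ha.2 j hj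
      have h3 : |y j - x j| ≤ dist (y j) (a j) + r := by
        have := abs_sub_abs_le_abs_sub (y j - x j) (a j - x j)
        rw [Real.dist_eq]
        have h4 : |y j - x j| ≤ |y j - a j| + |a j - x j| := by
          have := abs_sub_le (y j) (a j) (x j); linarith [abs_sub_le (y j) (a j) (x j)]
        linarith
      linarith [(dist_le_pi_dist y a j), h3]
    have h5 := abs_sub_le_iff.mp (show |y j - x j| ≤ r + δ by linarith [abs_nonneg (y j - x j)])
    constructor <;> linarith [h5.1, h5.2]

lemma box_subset_cthickening_kFace {n : ℕ} (x : Fin n → ℝ) (r δ : ℝ) (hδ : 0 ≤ δ)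
    (S : Finset (Fin n)) (ε : Fin n → Bool) :
    Set.univ.pi (fun j => if j ∈ S then Icc (faceVal x r ε j - δ) (faceVal x r ε j + δ)
        else Icc (x j - r) (x j + r)) ⊆
      cthickening δ (kFace x r S ε) := by
  classical
  intro y hy
  set a : Fin n → ℝ := fun j => if j ∈ S then faceVal x r ε j else y j with ha
  have haF : a ∈ kFace x r S ε := by
    constructor
    · intro j hj; simp [ha, hj, faceVal]
    · intro j hj
      have := hy j (mem_univ j)
      simp only [hj, if_false, mem_Icc] at this
      simp only [ha, hj, if_false]
      rw [abs_sub_le_iff]; constructor <;> linarith [this.1, this.2]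
  refine mem_cthickening_of_dist_le y a δ _ haF ?_
  rw [dist_pi_le_iff hδ]
  intro j
  by_cases hj : j ∈ S
  · have := hy j (mem_univ j)
    simp only [hj, if_true, mem_Icc] at this
    simp only [ha, hj, if_true, Real.dist_eq]
    rw [abs_sub_le_iff]; constructor <;> linarith [this.1, this.2]
  · simp [ha, hj, hδ]

lemma volume_cthickening_kFace_lower {n k : ℕ} (x : Fin n → ℝ) {r δ : ℝ} (hr : 1 ≤ r)
    (hδ : 0 < δ) {S : Finset (Fin n)} (hcard : S.card = n - k) (hk : k ≤ n)
    (ε : Fin n → Bool) :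
    ENNReal.ofReal (2 ^ n * δ ^ (n - k)) ≤ volume (cthickening δ (kFace x r S ε)) := by
  classical
  refine le_trans ?_ (measure_mono (box_subset_cthickening_kFace x r δ hδ.le S ε))
  rw [volume_pi_pi]
  have hcompl : Sᶜ.card = k := by
    rw [Finset.card_compl, hcard, Fintype.card_fin]
    omega
  have hval : ∀ j : Fin n,
      volume (if j ∈ S then Icc (faceVal x r ε j - δ) (faceVal x r ε j + δ)
        else Icc (x j - r) (x j + r)) = ENNReal.ofReal (if j ∈ S then 2 * δ else 2 * r) := by
    intro j
    by_cases hj : j ∈ S <;> simp [hj, Real.volume_Icc] <;> ring_nf <;>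
      rw [ENNReal.ofReal_mul' (by norm_num), ENNReal.ofReal_ofNat]
  calc ENNReal.ofReal (2 ^ n * δ ^ (n - k))
      ≤ ENNReal.ofReal ((2 * δ) ^ (n - k) * (2 * r) ^ k) := by
        apply ENNReal.ofReal_le_ofReal
        have h1 : (2:ℝ) ^ k ≤ (2 * r) ^ k := by
          apply pow_le_pow_left₀ (by norm_num) (by linarith)
        have h2 : (0:ℝ) < δ ^ (n - k) := pow_pos hδ _
        have h3 : (2 * δ) ^ (n - k) = 2 ^ (n-k) * δ ^ (n-k) := mul_pow 2 δ _
        have h4 : (2:ℝ) ^ n = 2 ^ (n - k) * 2 ^ k := by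
          rw [← pow_add]; congr 1; omega
        rw [h3, h4]
        calc 2 ^ (n-k) * (2:ℝ) ^ k * δ ^ (n-k) = 2 ^ (n-k) * δ ^ (n-k) * 2 ^ k := by ring
          _ ≤ 2 ^ (n-k) * δ ^ (n-k) * (2*r) ^ k := by
              apply mul_le_mul_of_nonneg_left h1; positivity
    _ = ∏ j : Fin n, ENNReal.ofReal (if j ∈ S then 2 * δ else 2 * r) := by
        rw [← Finset.prod_mul_prod_compl S]
        have e1 : ∏ j ∈ S, ENNReal.ofReal (if j ∈ S then 2 * δ else 2 * r)
            = ENNReal.ofReal (2 * δ) ^ (n - k) := by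
          rw [Finset.prod_congr rfl (fun j hj => by rw [if_pos hj]), Finset.prod_const, hcard]
        have e2 : ∏ j ∈ Sᶜ, ENNReal.ofReal (if j ∈ S then 2 * δ else 2 * r)
            = ENNReal.ofReal (2 * r) ^ k := by
          rw [Finset.prod_congr rfl (fun j hj => by
            rw [if_neg (Finset.mem_compl.mp hj)]), Finset.prod_const, hcompl]
        rw [e1, e2, ← ENNReal.ofReal_pow (by positivity), ← ENNReal.ofReal_pow (by positivity),
          ← ENNReal.ofReal_mul (by positivity)]
    _ = ∏ j : Fin n, volume (if j ∈ S then Icc (faceVal x r ε j - δ) (faceVal x r ε j + δ)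
          else Icc (x j - r) (x j + r)) := by
        exact (Finset.prod_congr rfl (fun j _ => (hval j))).symm

lemma volume_cthickening_kFace_lt_top {n : ℕ} (x : Fin n → ℝ) (r δ : ℝ) (hδ : 0 ≤ δ)
    (S : Finset (Fin n)) (ε : Fin n → Bool) :
    volume (cthickening δ (kFace x r S ε)) < ⊤ := by
  classical
  refine lt_of_le_of_lt (measure_mono (cthickening_kFace_subset x r δ hδ S ε)) ?_
  rw [volume_pi_pi]
  refine ENNReal.prod_lt_top (fun j _ => ?_)
  by_cases hj : j ∈ S <;> simp [hj, Real.volume_Icc, ENNReal.ofReal_lt_top]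

lemma grid_coord_iff {m : ℕ} {δ : ℝ} (hδ : 0 < δ) (hδm : δ * m = 1)
    {t : ℝ} (a : Fin m) (ht : 0 ≤ t) (ht1 : t < 1) :
    (⌊t / δ⌋).toNat % m = a.val ↔ δ * a ≤ t ∧ t < δ * (a + 1) := by
  have hu0 : 0 ≤ t / δ := div_nonneg ht hδ.le
  have hum : t / δ < (m : ℝ) := by rw [div_lt_iff₀ hδ]; nlinarith
  have hf0 : 0 ≤ ⌊t / δ⌋ := Int.floor_nonneg.mpr hu0
  have hfm : ⌊t / δ⌋ < (m : ℤ) := Int.floor_lt.mpr (by exact_mod_cast hum)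
  have htn : (⌊t / δ⌋).toNat < m := by omega
  rw [Nat.mod_eq_of_lt htn]
  constructor
  · intro h
    have hfa : ⌊t / δ⌋ = ((a : ℕ) : ℤ) := by omega
    have h1 := Int.floor_eq_iff.mp (by exact_mod_cast hfa)
    have h2 : ((a : ℕ) : ℝ) ≤ t / δ := by exact_mod_cast h1.1
    have h3 : t / δ < ((a : ℕ) : ℝ) + 1 := by exact_mod_cast h1.2
    constructor
    · rw [mul_comm]
      calc (a : ℝ) * δ ≤ t / δ * δ := by apply mul_le_mul_of_nonneg_right h2 hδ.le
        _ = t := by field_simp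
    · calc t = t / δ * δ := by field_simp
        _ < (((a : ℕ) : ℝ) + 1) * δ := by apply mul_lt_mul_of_pos_right h3 hδ
        _ = δ * ((a : ℝ) + 1) := by ring
  · rintro ⟨h1, h2⟩
    have hfa : ⌊t / δ⌋ = ((a : ℕ) : ℤ) := by
      rw [Int.floor_eq_iff]
      constructor
      · rw [le_div_iff₀ hδ]; push_cast; linarith
      · rw [div_lt_iff₀ hδ]; push_cast; linarith
    omega

lemma mem_Q0_and_zOf {n m : ℕ} (hm : 0 < m) {δ : ℝ} (hδ : 0 < δ) (hδm : δ * m = 1)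
    (x : Fin n → ℝ) (z : Fin n → Fin m) :
    (x ∈ Q0 n ∧ zOf δ hm x = z) ↔ ∀ j, δ * z j ≤ x j ∧ x j < δ * (z j + 1) := by
  constructor
  · rintro ⟨hQ, hz⟩ j
    have hx : 0 ≤ x j ∧ x j < 1 := by
      have := hQ j (mem_univ j); simpa [Q0] using this
    have hval : (⌊x j / δ⌋).toNat % m = (z j).val := by
      have := congrFun hz j
      exact congrArg Fin.val this
    exact (grid_coord_iff hδ hδm (z j) hx.1 hx.2).mp hval
  · intro h
    have hx : ∀ j, 0 ≤ x j ∧ x j < 1 := by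
      intro j
      have h1 := (h j).1
      have h2 := (h j).2
      have ha0 : (0:ℝ) ≤ (z j : ℝ) := by positivity
      have ham : ((z j : ℕ) : ℝ) + 1 ≤ (m : ℝ) := by
        have := (z j).isLt; exact_mod_cast Nat.succ_le_of_lt this
      constructor
      · nlinarith
      · calc x j < δ * ((z j : ℝ) + 1) := h2
          _ ≤ δ * m := by nlinarith
          _ = 1 := hδm
    constructor
    · intro j _; simp only [Q0, mem_Ico]; exact ⟨(hx j).1, (hx j).2⟩
    · funext j
      exact Fin.ext ((grid_coord_iff hδ hδm (z j) (hx j).1 (hx j).2).mpr (h j))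

lemma volume_gridBox {n m : ℕ} {δ : ℝ} (hδ : 0 < δ) (z : Fin n → Fin m) :
    volume (Set.univ.pi fun j => Ico (δ * z j) (δ * (z j + 1))) = ENNReal.ofReal (δ ^ n) := by
  rw [volume_pi_pi]
  have : ∀ j : Fin n, volume (Ico (δ * z j) (δ * ((z j : ℝ) + 1))) = ENNReal.ofReal δ := by
    intro j; rw [Real.volume_Ico]; congr 1; ring
  rw [Finset.prod_congr rfl (fun j _ => this j), Finset.prod_const, Finset.card_univ,
    Fintype.card_fin, ENNReal.ofReal_pow hδ.le]

lemma gridBox_disjoint {n m : ℕ} {δ : ℝ} (hδ : 0 < δ) {z z' : Fin n → Fin m} (hzz : z ≠ z') :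
    Disjoint (Set.univ.pi fun j => Ico (δ * z j) (δ * (z j + 1)))
      (Set.univ.pi fun j => Ico (δ * z' j) (δ * (z' j + 1))) := by
  rw [Set.disjoint_left]
  intro x hx hx'
  apply hzz
  funext j
  have h1 := hx j (mem_univ j)
  have h2 := hx' j (mem_univ j)
  simp only [mem_Ico] at h1 h2
  refine Fin.ext ?_
  by_contra hne
  rcases Nat.lt_or_ge (z j).val (z' j).val with hlt | hge
  · have : ((z j : ℕ) : ℝ) + 1 ≤ ((z' j : ℕ) : ℝ) := by exact_mod_cast hlt
    nlinarith [h1.2, h2.1]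
  · have hlt' : (z' j).val < (z j).val := by omega
    have : ((z' j : ℕ) : ℝ) + 1 ≤ ((z j : ℕ) : ℝ) := by exact_mod_cast hlt'
    nlinarith [h2.2, h1.1]

/-- Candidate plane-offset values near `y`. -/
def vcand {n : ℕ} (δ : ℝ) (y : Fin n → ℝ) (c : Fin n → Fin 3) : Fin n → ℝ :=
  fun j => δ * ((⌈y j / δ - 3/2⌉ : ℤ) + (c j : ℝ) + 1/2)

lemma exists_cand {δ : ℝ} (hδ : 0 < δ) {w t : ℝ} {s : ℤ} (hw : w = δ * ((s : ℝ) + 1/2))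
    (hnear : |t - w| ≤ δ) :
    ∃ c : Fin 3, w = δ * ((⌈t / δ - 3/2⌉ : ℤ) + (c : ℝ) + 1/2) := by
  have h1 : t - δ ≤ w := by have := abs_sub_le_iff.mp hnear; linarith [this.1, this.2]
  have h2 : w ≤ t + δ := by have := abs_sub_le_iff.mp hnear; linarith [this.1, this.2]
  have hδδ : t / δ * δ = t := by field_simp
  have hs1 : t / δ - 3/2 ≤ (s : ℝ) := by nlinarith [hw, h1, hδδ]
  have hs2 : (s : ℝ) ≤ t / δ + 1/2 := by nlinarith [hw, h2, hδδ]
  set a : ℤ := ⌈t / δ - 3/2⌉ with ha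
  have hle : a ≤ s := Int.ceil_le.mpr hs1
  have hge : s ≤ a + 2 := by
    have := Int.le_ceil (t / δ - 3/2)
    have : (s : ℝ) ≤ (a : ℝ) + 2 := by linarith
    exact_mod_cast this
  refine ⟨⟨(s - a).toNat, by omega⟩, ?_⟩
  have : (((s - a).toNat : ℕ) : ℝ) = (s : ℝ) - (a : ℝ) := by
    have h3 : ((s - a).toNat : ℤ) = s - a := Int.toNat_of_nonneg (by omega)
    exact_mod_cast h3
  rw [hw]
  simp only [this]
  ring

open Classical in
lemma multiplicity_bound {n k m : ℕ} (hn : 1 ≤ n) (hk : k ≤ n) {δ : ℝ} (hδ : 0 < δ)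
    (ρ : (Fin n → Fin m) → ℝ) (S : (Fin n → Fin m) → Finset (Fin n))
    (ε : (Fin n → Fin m) → Fin n → Bool)
    (hρ : ∀ z, ρ z ∈ Set.Icc (1 : ℝ) 2 ∧ ∃ t : ℤ, ρ z = δ * t)
    (hS : ∀ z, (S z).card = n - k) {C0 : ℝ} (hC0 : 0 < C0)
    (hOv : OverlapProp k δ ρ S ε C0) (B : Finset (Fin n → Fin m)) (y : Fin n → ℝ) :
    ((B.filter (fun z => y ∈ cthickening δ (linFace δ ρ S ε z))).card : ℝ) ≤
      (2 ^ n * 3 ^ n) *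
        (C0 * (B.card : ℝ) ^ (1 - ((n : ℝ) - k) * (2 * (n : ℝ) - 1) / (2 * (n : ℝ) ^ 2))) := by
  classical
  set e : ℝ := 1 - ((n : ℝ) - k) * (2 * (n : ℝ) - 1) / (2 * (n : ℝ) ^ 2) with he
  have hnR : (1 : ℝ) ≤ (n : ℝ) := by exact_mod_cast hn
  have he0 : 0 ≤ e := by
    rw [he, sub_nonneg, div_le_one (by positivity)]
    have hkn : (0:ℝ) ≤ (n : ℝ) - k := by
      have : (k : ℝ) ≤ (n : ℝ) := by exact_mod_cast hk
      linarith
    nlinarith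
  set G := B.filter (fun z => y ∈ cthickening δ (linFace δ ρ S ε z)) with hG
  set T : Finset (Fin n) × (Fin n → Fin 3) → Finset (Fin n → Fin m) := fun p =>
    G.filter (fun z => S z = p.1 ∧
      linFace δ ρ S ε z ⊆ planeTranslate p.1ᶜ (vcand δ y p.2)) with hT
  have hsub : G ⊆ Finset.univ.biUnion T := by
    intro z hz
    rw [Finset.mem_biUnion]
    have hzy : y ∈ cthickening δ (linFace δ ρ S ε z) := (Finset.mem_filter.mp hz).2
    obtain ⟨t, ht⟩ := (hρ z).2
    have hbox := cthickening_kFace_subset (gridCenter δ z) (ρ z) δ hδ.le (S z) (ε z) hzy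
    have hex : ∀ j ∈ S z, ∃ c : Fin 3,
        faceVal (gridCenter δ z) (ρ z) (ε z) j =
          δ * ((⌈y j / δ - 3/2⌉ : ℤ) + (c : ℝ) + 1/2) := by
      intro j hj
      have hnear : |y j - faceVal (gridCenter δ z) (ρ z) (ε z) j| ≤ δ := by
        have := hbox j (mem_univ j)
        simp only [hj, if_true, mem_Icc] at this
        rw [abs_sub_le_iff]; constructor <;> linarith [this.1, this.2]
      refine exists_cand hδ (w := faceVal (gridCenter δ z) (ρ z) (ε z) j)
        (s := (z j : ℤ) + (if ε z j then t else -t)) ?_ hnear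
      simp only [faceVal, gridCenter, ht]
      by_cases hε : ε z j <;> simp [hε] <;> push_cast <;> ring
    set c : Fin n → Fin 3 := fun j => if hj : j ∈ S z then (hex j hj).choose else 0 with hc
    refine ⟨(S z, c), Finset.mem_univ _, Finset.mem_filter.mpr ⟨hz, rfl, ?_⟩⟩
    intro w hw j hj
    have hjS : j ∈ S z := by simpa using hj
    have hwj : w j = faceVal (gridCenter δ z) (ρ z) (ε z) j := hw.1 j hjS
    rw [hwj]
    have := (hex j hjS).choose_spec
    simp only [vcand, hc, dif_pos hjS]
    exact this
  have hcard1 : (G.card : ℝ) ≤ ∑ p : Finset (Fin n) × (Fin n → Fin 3), ((T p).card : ℝ) := by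
    have h1 : G.card ≤ (Finset.univ.biUnion T).card := Finset.card_le_card hsub
    have h2 : (Finset.univ.biUnion T).card ≤ ∑ p, (T p).card := Finset.card_biUnion_le
    push_cast
    exact_mod_cast h1.trans h2
  have hpart : ∀ p : Finset (Fin n) × (Fin n → Fin 3),
      ((T p).card : ℝ) ≤ C0 * (B.card : ℝ) ^ e := by
    intro p
    rcases Finset.eq_empty_or_nonempty (T p) with hemp | ⟨z0, hz0⟩
    · rw [hemp]
      simp only [Finset.card_empty, Nat.cast_zero]
      positivity
    · have hz0' := Finset.mem_filter.mp hz0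
      have hπcard : (p.1ᶜ : Finset (Fin n)).card = k := by
        rw [Finset.card_compl, ← hz0'.2.1, hS z0, Fintype.card_fin]
        omega
      set J : Set (Fin n → Fin m) := {z | z ∈ B ∧ S z = p.1} with hJ
      have hpar : ∀ z ∈ J, ∃ v : Fin n → ℝ, linFace δ ρ S ε z ⊆ planeTranslate p.1ᶜ v := by
        intro z hz
        refine ⟨faceVal (gridCenter δ z) (ρ z) (ε z), fun w hw j hj => ?_⟩
        have hjS : j ∈ S z := by rw [hz.2]; simpa using hj
        exact hw.1 j hjS
      have hov := hOv p.1ᶜ hπcard J hpar (vcand δ y p.2)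
      have hsub2 : ((T p : Set (Fin n → Fin m))) ⊆
          {z ∈ J | linFace δ ρ S ε z ⊆ planeTranslate p.1ᶜ (vcand δ y p.2)} := by
        intro z hz
        have hz' := Finset.mem_filter.mp hz
        have hzB : z ∈ B := (Finset.mem_filter.mp hz'.1).1
        exact ⟨⟨hzB, hz'.2.1⟩, hz'.2.2⟩
      have h3 : ((T p).card : ℝ) ≤
          ({z ∈ J | linFace δ ρ S ε z ⊆ planeTranslate p.1ᶜ (vcand δ y p.2)}).ncard := by
        rw [← Set.ncard_coe_finset]
        exact_mod_cast Set.ncard_le_ncard hsub2 (Set.toFinite _)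
      refine h3.trans (hov.trans ?_)
      have hJB : J.ncard ≤ B.card := by
        rw [← Set.ncard_coe_finset]
        exact Set.ncard_le_ncard (fun z hz => hz.1) (Set.toFinite _)
      have := Real.rpow_le_rpow (by positivity) (show (J.ncard : ℝ) ≤ (B.card : ℝ) by
        exact_mod_cast hJB) he0
      nlinarith [this]
  calc (G.card : ℝ) ≤ ∑ p : Finset (Fin n) × (Fin n → Fin 3), ((T p).card : ℝ) := hcard1
    _ ≤ (Fintype.card (Finset (Fin n) × (Fin n → Fin 3)) : ℝ) * (C0 * (B.card : ℝ) ^ e) := by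
        rw [← Finset.card_univ, ← nsmul_eq_mul]
        exact Finset.sum_le_card_nsmul _ _ _ (fun p _ => hpart p)
    _ = (2 ^ n * 3 ^ n) * (C0 * (B.card : ℝ) ^ e) := by
        rw [Fintype.card_prod, Fintype.card_finset, Fintype.card_fun, Fintype.card_fin,
          Fintype.card_fin]
        push_cast
        ring
/-- weak-type `(1,q)` bound for the linearized operator, `q > q*`.
If the face selection has the overlap property with constant `C₀ = C₀(n,k)`, then there is
`C = C(k,n,q) > 0` such that for every `f ∈ L¹` supported in `7Q₀` and every `λ > 0`,
`λ |{x ∈ Q₀ : M̃^k_{ρ,δ} f (x) > λ}|^{1/q} ≤ C δ^{n/q + k - n} ‖f‖_{L¹}`. -/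
theorem linMax_weak_type_high (n k : ℕ) (hn : 2 ≤ n) (hk : k < n)
    (q : ℝ) (hq1 : 1 < q)
    (hq2 : 2 * (n : ℝ) ^ 2 / (((n : ℝ) - k) * (2 * (n : ℝ) - 1)) < q)
    (C0 : ℝ) (hC0 : 0 < C0) :
    ∃ C > 0, ∀ δ ∈ Set.Ioo (0 : ℝ) 1, ∀ (m : ℕ) (hm : 0 < m), δ * m = 1 →
      ∀ (ρ : (Fin n → Fin m) → ℝ),
        (∀ z, ρ z ∈ Set.Icc (1 : ℝ) 2 ∧ ∃ t : ℤ, ρ z = δ * t) →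
      ∀ (S : (Fin n → Fin m) → Finset (Fin n)), (∀ z, (S z).card = n - k) →
      ∀ (ε : (Fin n → Fin m) → Fin n → Bool), OverlapProp k δ ρ S ε C0 →
      ∀ f : (Fin n → ℝ) → ℝ, Integrable f volume → Function.support f ⊆ sevenQ0 n →
      ∀ lam : ℝ, 0 < lam →
        ENNReal.ofReal lam *
            volume {x ∈ Q0 n | lam < linMax δ hm ρ S ε f x} ^ (1 / q) ≤
          ENNReal.ofReal (C * δ ^ ((n : ℝ) / q + k - n)) * eLpNorm f 1 volume := by
  classical
  refine ⟨3 ^ n * C0, by positivity, ?_⟩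
  rintro δ ⟨hδ0, hδ1⟩ m hm hδm ρ hρ S hS ε hOv f hf hsupp lam hlam
  set e : ℝ := 1 - ((n : ℝ) - k) * (2 * (n : ℝ) - 1) / (2 * (n : ℝ) ^ 2) with he
  set T : (Fin n → Fin m) → Set (Fin n → ℝ) := fun z => cthickening δ (linFace δ ρ S ε z)
    with hTdef
  set A : (Fin n → Fin m) → ℝ := fun z => ⨍ y in T z, |f y| with hA
  set BadF : Finset (Fin n → Fin m) := Finset.univ.filter (fun z => lam < A z) with hBadF
  set N : ℕ := BadF.card with hN
  have hlinmax : ∀ x, linMax δ hm ρ S ε f x = A (zOf δ hm x) := fun x => rfl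
  -- Step 1: the superlevel set is a union of grid boxes
  have hset : {x ∈ Q0 n | lam < linMax δ hm ρ S ε f x} =
      ⋃ z ∈ BadF, (Set.univ.pi fun j => Ico (δ * z j) (δ * (z j + 1))) := by
    ext x
    simp only [mem_setOf_eq, mem_iUnion, exists_prop, hBadF, Finset.mem_filter,
      Finset.mem_univ, true_and]
    constructor
    · rintro ⟨hxQ, hxl⟩
      refine ⟨zOf δ hm x, by rwa [hlinmax x] at hxl, ?_⟩
      have h1 := (mem_Q0_and_zOf hm hδ0 hδm x (zOf δ hm x)).mp ⟨hxQ, rfl⟩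
      intro j _
      exact ⟨(h1 j).1, (h1 j).2⟩
    · rintro ⟨z, hlz, hxz⟩
      have hmem : x ∈ Q0 n ∧ zOf δ hm x = z := by
        refine (mem_Q0_and_zOf hm hδ0 hδm x z).mpr (fun j => ?_)
        have := hxz j (mem_univ j)
        exact ⟨this.1, this.2⟩
      refine ⟨hmem.1, ?_⟩
      rw [hlinmax x, hmem.2]
      exact hlz
  have hvol : volume {x ∈ Q0 n | lam < linMax δ hm ρ S ε f x} =
      (N : ENNReal) * ENNReal.ofReal (δ ^ n) := by
    rw [hset, measure_biUnion_finset ?_ ?_]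
    · rw [Finset.sum_congr rfl (fun z _ => volume_gridBox hδ0 z), Finset.sum_const, ← hN,
        nsmul_eq_mul]
    · intro z hz z' hz' hne
      exact gridBox_disjoint hδ0 hne
    · intro z _
      exact MeasurableSet.univ_pi (fun j => measurableSet_Ico)
  -- Step 2: volume bounds for the thickened faces
  have hTvol_lo : ∀ z, ENNReal.ofReal (2 ^ n * δ ^ (n - k)) ≤ volume (T z) := fun z =>
    volume_cthickening_kFace_lower (gridCenter δ z) (hρ z).1.1 hδ0 (hS z) hk.le (ε z)
  have hTtop : ∀ z, volume (T z) < ⊤ := fun z =>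
    volume_cthickening_kFace_lt_top (gridCenter δ z) (ρ z) δ hδ0.le (S z) (ε z)
  have hTreal : ∀ z, 2 ^ n * δ ^ (n - k) ≤ (volume (T z)).toReal := by
    intro z
    have h1 := ENNReal.toReal_mono (hTtop z).ne (hTvol_lo z)
    rwa [ENNReal.toReal_ofReal (by positivity)] at h1
  have hTpos : ∀ z, 0 < (volume (T z)).toReal := fun z =>
    lt_of_lt_of_le (by positivity) (hTreal z)
  have hkey1 : ∀ z ∈ BadF, lam * (volume (T z)).toReal ≤ ∫ y in T z, |f y| := by
    intro z hz
    have hlz : lam < A z := (Finset.mem_filter.mp hz).2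
    rw [hA] at hlz
    simp only at hlz
    rw [setAverage_eq, smul_eq_mul] at hlz
    have hpos := hTpos z
    calc lam * (volume (T z)).toReal
        ≤ ((volume (T z)).toReal⁻¹ * ∫ y in T z, |f y|) * (volume (T z)).toReal := by
          apply mul_le_mul_of_nonneg_right hlz.le hpos.le
      _ = ∫ y in T z, |f y| := by field_simp
  -- Step 3: summation and multiplicity
  set I : ℝ := ∫ y, |f y| with hI
  have hI0 : 0 ≤ I := integral_nonneg (fun y => abs_nonneg _)
  have hfabs : Integrable (fun y => |f y|) volume := hf.abs
  have hme : ∀ z, MeasurableSet (T z) := fun z => (isClosed_cthickening).measurableSet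
  have hind : ∀ z : Fin n → Fin m, Integrable ((T z).indicator (fun y => |f y|)) volume :=
    fun z => hfabs.indicator (hme z)
  have hstep : ∑ z ∈ BadF, ∫ y in T z, |f y| =
      ∫ y, ∑ z ∈ BadF, (T z).indicator (fun y' => |f y'|) y := by
    rw [integral_finset_sum _ (fun z _ => hind z)]
    exact Finset.sum_congr rfl (fun z _ => (integral_indicator (hme z)).symm)
  have hmult : ∀ y, ((BadF.filter (fun z => y ∈ T z)).card : ℝ) ≤
      2 ^ n * 3 ^ n * (C0 * (N : ℝ) ^ e) := by
    intro y
    have := multiplicity_bound (by omega) hk.le hδ0 ρ S ε hρ hS hC0 hOv BadF y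
    rw [← he, ← hN] at this
    exact this
  have hptw : ∀ y, ∑ z ∈ BadF, (T z).indicator (fun y' => |f y'|) y ≤
      (2 ^ n * 3 ^ n * (C0 * (N : ℝ) ^ e)) * |f y| := by
    intro y
    have h1 : ∑ z ∈ BadF, (T z).indicator (fun y' => |f y'|) y =
        ((BadF.filter (fun z => y ∈ T z)).card : ℝ) * |f y| := by
      rw [Finset.sum_congr rfl (fun z _ => Set.indicator_apply (T z) _ y), Finset.sum_ite,
        Finset.sum_const, Finset.sum_const, smul_zero, add_zero, nsmul_eq_mul]
    rw [h1]
    exact mul_le_mul_of_nonneg_right (hmult y) (abs_nonneg _)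
  have hsum2 : ∑ z ∈ BadF, ∫ y in T z, |f y| ≤ 2 ^ n * 3 ^ n * (C0 * (N : ℝ) ^ e) * I := by
    rw [hstep, ← integral_const_mul]
    exact integral_mono (integrable_finset_sum _ (fun z _ => hind z))
      (hfabs.const_mul _) hptw
  have hsum1 : (N : ℝ) * (lam * (2 ^ n * δ ^ (n - k))) ≤ ∑ z ∈ BadF, ∫ y in T z, |f y| := by
    calc (N : ℝ) * (lam * (2 ^ n * δ ^ (n - k)))
        = ∑ _z ∈ BadF, lam * (2 ^ n * δ ^ (n - k)) := by
          rw [Finset.sum_const, ← hN, nsmul_eq_mul]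
      _ ≤ ∑ z ∈ BadF, lam * (volume (T z)).toReal := by
          exact Finset.sum_le_sum (fun z _ => mul_le_mul_of_nonneg_left (hTreal z) hlam.le)
      _ ≤ ∑ z ∈ BadF, ∫ y in T z, |f y| := Finset.sum_le_sum hkey1
  have h2n : (0 : ℝ) < 2 ^ n := by positivity
  have key : lam * N * δ ^ (n - k) ≤ 3 ^ n * C0 * (N : ℝ) ^ e * I := by
    have h0 := hsum1.trans hsum2
    have e1 : (N : ℝ) * (lam * (2 ^ n * δ ^ (n - k))) = lam * N * δ ^ (n - k) * 2 ^ n := by ring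
    have e2 : (2:ℝ) ^ n * 3 ^ n * (C0 * (N : ℝ) ^ e) * I = 3 ^ n * C0 * (N : ℝ) ^ e * I * 2 ^ n := by
      ring
    rw [e1, e2] at h0
    exact le_of_mul_le_mul_right h0 h2n
  -- Step 4: conclusion
  have hL1 : eLpNorm f 1 volume = ENNReal.ofReal I := by
    rw [eLpNorm_one_eq_lintegral_enorm, ← ofReal_integral_norm_eq_lintegral_enorm hf]
    congr 1
  rw [hvol, hL1]
  rcases Nat.eq_zero_or_pos N with hN0 | hNpos
  · rw [hN0]
    simp only [Nat.cast_zero, zero_mul]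
    rw [ENNReal.zero_rpow_of_pos (by positivity)]
    simp
  · have hNR : (1 : ℝ) ≤ (N : ℝ) := by exact_mod_cast hNpos
    have hNposR : (0 : ℝ) < (N : ℝ) := by linarith
    have hq0 : (0 : ℝ) < q := by linarith
    -- ENNReal → Real reduction
    have hrw : (N : ENNReal) * ENNReal.ofReal (δ ^ n) = ENNReal.ofReal ((N : ℝ) * δ ^ n) := by
      rw [ENNReal.ofReal_mul (by positivity), ENNReal.ofReal_natCast]
    rw [hrw, ENNReal.ofReal_rpow_of_pos (by positivity), ← ENNReal.ofReal_mul hlam.le,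
      ← ENNReal.ofReal_mul (by positivity)]
    apply ENNReal.ofReal_le_ofReal
    -- the real inequality
    have hqe : 1 / q ≤ 1 - e := by
      have hd : (0 : ℝ) < ((n : ℝ) - k) * (2 * (n : ℝ) - 1) := by
        have h1 : (k : ℝ) < (n : ℝ) := by exact_mod_cast hk
        have h2 : (2 : ℝ) ≤ (n : ℝ) := by exact_mod_cast hn
        nlinarith
      have hq2' : 0 < 2 * (n : ℝ) ^ 2 / (((n : ℝ) - k) * (2 * (n : ℝ) - 1)) := by
        have h2 : (2 : ℝ) ≤ (n : ℝ) := by exact_mod_cast hn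
        positivity
      have := one_div_lt_one_div_of_lt hq2' hq2
      rw [one_div_div] at this
      rw [he]
      ring_nf
      ring_nf at this
      linarith
    have hmono : (N : ℝ) ^ (1 / q) ≤ (N : ℝ) ^ (1 - e) :=
      Real.rpow_le_rpow_of_exponent_le hNR hqe
    have hNe : (0 : ℝ) < (N : ℝ) ^ e := Real.rpow_pos_of_pos hNposR e
    have hδd : (0 : ℝ) < δ ^ (n - k) := by positivity
    have h1 : lam * (N : ℝ) ^ (1 - e) * δ ^ (n - k) ≤ 3 ^ n * C0 * I := by
      have hc : lam * (N : ℝ) ^ (1 - e) * δ ^ (n - k) * (N : ℝ) ^ e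
          = lam * N * δ ^ (n - k) := by
        have : (N : ℝ) ^ (1 - e) * (N : ℝ) ^ e = (N : ℝ) := by
          rw [← Real.rpow_add hNposR]
          norm_num
        calc lam * (N : ℝ) ^ (1 - e) * δ ^ (n - k) * (N : ℝ) ^ e
            = lam * ((N : ℝ) ^ (1 - e) * (N : ℝ) ^ e) * δ ^ (n - k) := by ring
          _ = lam * N * δ ^ (n - k) := by rw [this]
      have h2 : lam * (N : ℝ) ^ (1 - e) * δ ^ (n - k) * (N : ℝ) ^ e
          ≤ (3 ^ n * C0 * I) * (N : ℝ) ^ e := by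
        rw [hc]
        calc lam * N * δ ^ (n - k) ≤ 3 ^ n * C0 * (N : ℝ) ^ e * I := key
          _ = (3 ^ n * C0 * I) * (N : ℝ) ^ e := by ring
      exact le_of_mul_le_mul_right h2 hNe
    -- split the LHS product
    have hsplit : ((N : ℝ) * δ ^ n) ^ (1 / q) = (N : ℝ) ^ (1 / q) * δ ^ ((n : ℝ) / q) := by
      rw [Real.mul_rpow (by positivity) (by positivity)]
      congr 1
      rw [← Real.rpow_natCast δ n, ← Real.rpow_mul hδ0.le]
      congr 1
      ring
    have hδsplit : δ ^ ((n : ℝ) / q + k - n) = δ ^ ((n : ℝ) / q) * (δ ^ (n - k))⁻¹ := by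
      have h3 : ((n : ℝ) / q + k - n) = (n : ℝ) / q + ((k : ℝ) - n) := by ring
      rw [h3, Real.rpow_add hδ0]
      congr 1
      rw [← Real.rpow_natCast δ (n - k), Nat.cast_sub hk.le, ← Real.rpow_neg hδ0.le]
      congr 1
      ring
    calc lam * ((N : ℝ) * δ ^ n) ^ (1 / q)
        = lam * (N : ℝ) ^ (1 / q) * δ ^ ((n : ℝ) / q) := by rw [hsplit]; ring
      _ ≤ lam * (N : ℝ) ^ (1 - e) * δ ^ ((n : ℝ) / q) := by
          have hδq : (0:ℝ) ≤ δ ^ ((n : ℝ) / q) := Real.rpow_nonneg hδ0.le _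
          apply mul_le_mul_of_nonneg_right _ hδq
          exact mul_le_mul_of_nonneg_left hmono hlam.le
      _ ≤ (3 ^ n * C0 * I) / δ ^ (n - k) * δ ^ ((n : ℝ) / q) := by
          apply mul_le_mul_of_nonneg_right _ (Real.rpow_nonneg hδ0.le _)
          rw [le_div_iff₀ hδd]
          exact h1
      _ = 3 ^ n * C0 * δ ^ ((n : ℝ) / q + k - n) * I := by
          rw [hδsplit]
          field_simp
end
end

section
/- Let n ≥ 2 and 0 ≤ k < n be integers, δ ∈ (0,1), and x_0 ∈ ℝ^n. Let B = S_k(x_0, 1) be the k-skeleton of the axis-parallel cube with center x_0 and side length 2, and let B_{6δ} be the closed 6δ-neighborhood of B in the ℓ∞ metric. Then for every x ∈ ℝ^n with ‖x − x_0‖_∞ ≤ δ, M^k_δ 1_{B_{6δ}}(x) ≥ 1. -/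
open MeasureTheory Metric Set

noncomputable section

section AuxSkel

variable {n : ℕ}

lemma kFace_subset_closedBall (x : Fin n → ℝ) {r : ℝ} (hr : 0 ≤ r) (S : Finset (Fin n))
    (ε : Fin n → Bool) : kFace x r S ε ⊆ Metric.closedBall x r := by
  intro y hy
  rw [Metric.mem_closedBall]
  refine (dist_pi_le_iff hr).2 fun j => ?_
  by_cases hj : j ∈ S
  · rw [Real.dist_eq, hy.1 j hj, add_sub_cancel_left]
    cases ε j <;> simp [abs_of_nonneg hr]
  · rw [Real.dist_eq]; exact hy.2 j hj

lemma kFace_isBounded (x : Fin n → ℝ) {r : ℝ} (hr : 0 ≤ r) (S : Finset (Fin n))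
    (ε : Fin n → Bool) : Bornology.IsBounded (kFace x r S ε) :=
  Metric.isBounded_closedBall.subset (kFace_subset_closedBall x hr S ε)

lemma corner_mem_kFace (x : Fin n → ℝ) {r : ℝ} (hr : 0 ≤ r) (S : Finset (Fin n))
    (ε : Fin n → Bool) : (fun j => x j + (if ε j then r else -r)) ∈ kFace x r S ε := by
  refine ⟨fun j _ => rfl, fun j _ => ?_⟩
  rw [add_sub_cancel_left]
  cases ε j <;> simp [abs_of_nonneg hr]

lemma kFace_subset_cthickening {x x₀ : Fin n → ℝ} {c r : ℝ} (h : dist x x₀ ≤ c)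
    (S : Finset (Fin n)) (ε : Fin n → Bool) :
    kFace x r S ε ⊆ cthickening c (kFace x₀ r S ε) := by
  intro z hz
  have hc : 0 ≤ c := le_trans dist_nonneg h
  refine mem_cthickening_of_dist_le z (fun j => z j + (x₀ j - x j)) c _ ⟨?_, ?_⟩ ?_
  · intro j hj
    show z j + (x₀ j - x j) = x₀ j + if ε j = true then r else -r
    rw [hz.1 j hj]; ring
  · intro j hj
    show |z j + (x₀ j - x j) - x₀ j| ≤ r
    have : z j + (x₀ j - x j) - x₀ j = z j - x j := by ring
    rw [this]; exact hz.2 j hj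
  · refine (dist_pi_le_iff hc).2 fun j => ?_
    show dist (z j) (z j + (x₀ j - x j)) ≤ c
    have : dist (z j) (z j + (x₀ j - x j)) = dist (x j) (x₀ j) := by
      rw [Real.dist_eq, Real.dist_eq]; ring_nf
    rw [this]
    exact le_trans (dist_le_pi_dist x x₀ j) h

lemma kFace_subset_skeleton {k : ℕ} (x : Fin n → ℝ) (r : ℝ) {S : Finset (Fin n)}
    (hS : S.card = n - k) (ε : Fin n → Bool) : kFace x r S ε ⊆ skeleton n k x r := by
  intro y hy
  exact Set.mem_iUnion.2 ⟨S, Set.mem_iUnion.2 ⟨hS, Set.mem_iUnion.2 ⟨ε, hy⟩⟩⟩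

end AuxSkel

/-- if `B = S_k(x₀,1)` is the `k`-skeleton of the axis-parallel cube
with center `x₀` and side length `2`, and `B_{6δ}` is its closed `6δ`-neighborhood in the
`ℓ∞` metric (the sup metric on `Fin n → ℝ`), then `M^k_δ 1_{B_{6δ}} (x) ≥ 1` whenever
`‖x - x₀‖_∞ ≤ δ`. -/
theorem skelMax_indicator_thickened_skeleton (n k : ℕ) (hn : 2 ≤ n) (hk : k < n)
    (δ : ℝ) (hδ : δ ∈ Set.Ioo (0 : ℝ) 1) (x₀ : Fin n → ℝ) :
    ∀ x : Fin n → ℝ, dist x x₀ ≤ δ →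
      1 ≤ skelMax n k δ
        ((cthickening (6 * δ) (skeleton n k x₀ 1)).indicator fun _ => (1 : ℝ)) x := by
  obtain ⟨hδ0, hδ1⟩ := hδ
  intro x hx
  set B : Set (Fin n → ℝ) := cthickening (6 * δ) (skeleton n k x₀ 1) with hBdef
  set f : (Fin n → ℝ) → ℝ := B.indicator fun _ => (1 : ℝ) with hfdef
  have hskel_bdd : Bornology.IsBounded (skeleton n k x₀ 1) := by
    rw [skeleton]
    refine (Metric.isBounded_closedBall (x := x₀) (r := 1)).subset ?_
    refine Set.iUnion_subset fun S => Set.iUnion_subset fun _ => Set.iUnion_subset fun ε => ?_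
    exact kFace_subset_closedBall x₀ zero_le_one S ε
  have hBmeas : MeasurableSet B := isClosed_cthickening.measurableSet
  have hBvol : volume B < ⊤ :=
    (Metric.isCompact_of_isClosed_isBounded isClosed_cthickening
      hskel_bdd.cthickening).measure_lt_top
  have hfint : Integrable f := by
    rw [hfdef]
    exact (integrable_indicator_iff hBmeas).2 (integrableOn_const hBvol.ne)
  have habs : ∀ y, |f y| = f y := fun y =>
    abs_of_nonneg (by rw [hfdef]; exact Set.indicator_nonneg (fun _ _ => zero_le_one) y)
  have havg_nonneg : ∀ A : Set (Fin n → ℝ), 0 ≤ ⨍ y in A, |f y| := fun A => by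
    rw [setAverage_eq]
    exact smul_nonneg (inv_nonneg.2 ENNReal.toReal_nonneg)
      (integral_nonneg fun y => abs_nonneg _)
  have havg_le_one : ∀ A : Set (Fin n → ℝ), MeasurableSet A → volume A < ⊤ →
      (⨍ y in A, |f y|) ≤ 1 := by
    intro A hA hAvol
    rw [setAverage_eq]
    have h1 : (∫ y in A, |f y|) ≤ ∫ _ in A, (1 : ℝ) := by
      refine setIntegral_mono_on hfint.abs.integrableOn
        (integrableOn_const hAvol.ne) hA ?_
      intro y _
      rw [habs y, hfdef]
      by_cases hy : y ∈ B <;> simp [hy]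
    rw [setIntegral_const, smul_eq_mul, mul_one] at h1
    rw [smul_eq_mul]
    rcases eq_or_ne (volume A).toReal 0 with h0 | h0
    · rw [show volume.real A = 0 from h0, inv_zero, zero_mul]; exact zero_le_one
    · calc (volume A).toReal⁻¹ * ∫ y in A, |f y|
          ≤ (volume A).toReal⁻¹ * (volume A).toReal :=
            mul_le_mul_of_nonneg_left h1 (inv_nonneg.2 ENNReal.toReal_nonneg)
        _ = 1 := inv_mul_cancel₀ h0
  have havg_eq_one : ∀ A : Set (Fin n → ℝ), MeasurableSet A → volume A ≠ 0 →
      volume A ≠ ⊤ → A ⊆ B → (⨍ y in A, |f y|) = 1 := by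
    intro A hA h0 htop hsub
    rw [setAverage_eq, setIntegral_congr_fun hA (g := fun _ => (1 : ℝ))
      (fun y hy => by rw [habs y, hfdef]; exact Set.indicator_of_mem (hsub hy) _),
      setIntegral_const, smul_eq_mul, smul_eq_mul, mul_one,
      inv_mul_cancel₀ (show volume.real A ≠ 0 from ENNReal.toReal_ne_zero.2 ⟨h0, htop⟩)]
  haveI hSne : Nonempty {S : Finset (Fin n) // S.card = n - k} := by
    obtain ⟨t, -, ht⟩ := Finset.exists_subset_card_eq
      (show n - k ≤ (Finset.univ : Finset (Fin n)).card by
        rw [Finset.card_univ, Fintype.card_fin]; exact Nat.sub_le n k)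
    exact ⟨⟨t, ht⟩⟩
  set G : ℝ → ℝ := fun r =>
    ⨅ (S : {S : Finset (Fin n) // S.card = n - k}) (ε : Fin n → Bool),
      ⨍ y in cthickening δ (kFace x r S.1 ε), |f y| with hGdef
  have hG_le_one : ∀ r ∈ Set.Icc (1 : ℝ) 2, G r ≤ 1 := by
    intro r hr
    have hr0 : (0 : ℝ) ≤ r := le_trans zero_le_one hr.1
    obtain ⟨S₀⟩ := hSne
    have h2 : G r ≤ ⨅ ε : Fin n → Bool, ⨍ y in cthickening δ (kFace x r S₀.1 ε), |f y| :=
      ciInf_le ⟨0, by rintro _ ⟨S, rfl⟩; exact le_ciInf fun ε => havg_nonneg _⟩ S₀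
    have h3 : (⨅ ε : Fin n → Bool, ⨍ y in cthickening δ (kFace x r S₀.1 ε), |f y|) ≤
        ⨍ y in cthickening δ (kFace x r S₀.1 fun _ => true), |f y| :=
      ciInf_le ⟨0, by rintro _ ⟨ε, rfl⟩; exact havg_nonneg _⟩ _
    refine h2.trans (h3.trans (havg_le_one _ isClosed_cthickening.measurableSet ?_))
    exact (Metric.isCompact_of_isClosed_isBounded isClosed_cthickening
      ((kFace_isBounded x hr0 S₀.1 _).cthickening)).measure_lt_top
  have hG1 : G 1 = 1 := by
    have heach : ∀ (S : {S : Finset (Fin n) // S.card = n - k}) (ε : Fin n → Bool),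
        (⨍ y in cthickening δ (kFace x 1 S.1 ε), |f y|) = 1 := by
      intro S ε
      refine havg_eq_one _ isClosed_cthickening.measurableSet ?_ ?_ ?_
      · have hball : ball (fun j => x j + if ε j then (1 : ℝ) else -1) δ ⊆
            cthickening δ (kFace x 1 S.1 ε) :=
          (ball_subset_thickening (corner_mem_kFace x zero_le_one S.1 ε) δ).trans
            (thickening_subset_cthickening δ _)
        exact ((measure_ball_pos volume _ hδ0).trans_le (measure_mono hball)).ne'
      · exact (Metric.isCompact_of_isClosed_isBounded isClosed_cthickening
          ((kFace_isBounded x zero_le_one S.1 ε).cthickening)).measure_lt_top.ne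
      · calc cthickening δ (kFace x 1 S.1 ε)
            ⊆ cthickening δ (cthickening δ (kFace x₀ 1 S.1 ε)) :=
              cthickening_subset_of_subset δ (kFace_subset_cthickening hx S.1 ε)
          _ ⊆ cthickening (δ + δ) (kFace x₀ 1 S.1 ε) :=
              cthickening_cthickening_subset hδ0.le hδ0.le _
          _ ⊆ cthickening (δ + δ) (skeleton n k x₀ 1) :=
              cthickening_subset_of_subset _ (kFace_subset_skeleton x₀ 1 S.2 ε)
          _ ⊆ B := cthickening_mono (by linarith) _
    simp only [hGdef, heach, ciInf_const]
  have key : skelMax n k δ f x = ⨆ r : ℝ, ⨆ _ : r ∈ Set.Icc (1 : ℝ) 2, G r := rfl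
  rw [key]
  have hbdd : BddAbove (Set.range fun r : ℝ => ⨆ _ : r ∈ Set.Icc (1 : ℝ) 2, G r) := by
    refine ⟨1, ?_⟩
    rintro _ ⟨r, rfl⟩
    show (⨆ _ : r ∈ Set.Icc (1 : ℝ) 2, G r) ≤ 1
    by_cases hr : r ∈ Set.Icc (1 : ℝ) 2
    · haveI : Nonempty (r ∈ Set.Icc (1 : ℝ) 2) := ⟨hr⟩
      rw [ciSup_const]; exact hG_le_one r hr
    · haveI : IsEmpty (r ∈ Set.Icc (1 : ℝ) 2) := ⟨hr⟩
      rw [Real.iSup_of_isEmpty]; exact zero_le_one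
  have h1mem : (1 : ℝ) ∈ Set.Icc (1 : ℝ) 2 := ⟨le_refl 1, one_le_two⟩
  haveI : Nonempty ((1 : ℝ) ∈ Set.Icc (1 : ℝ) 2) := ⟨h1mem⟩
  calc (1 : ℝ) = G 1 := hG1.symm
    _ = ⨆ _ : (1 : ℝ) ∈ Set.Icc (1 : ℝ) 2, G 1 := ciSup_const.symm
    _ ≤ ⨆ r : ℝ, ⨆ _ : r ∈ Set.Icc (1 : ℝ) 2, G r := le_ciSup hbdd 1
end
end
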